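/- Let G be a finite nilpotent group with Sylow subgroups P_1, ..., P_r, and let x ∈ G have Sylow decomposition x = x_1 ··· x_r with x_i ∈ P_i. Then ⟨x⟩ is a maximal cyclic subgroup of G if and only if ⟨x_i⟩ is a maximal cyclic subgroup of P_i for every i ∈ [r]. -/

import Mathlib

/-- The power graph of a group: distinct `x` and `y` are adjacent iff one is a
positive power of the other. -/
def powerGraph (G : Type*) [Group G] : SimpleGraph G where
  Adj x y := x ≠ y ∧ ((∃ k : ℕ, 0 < k ∧ x = y ^ k) ∨ (∃ k : ℕ, 0 < k ∧ y = x ^ k))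
  symm := by
    refine ⟨?_⟩
    intro x y h
    exact ⟨h.1.symm, h.2.symm⟩
  loopless := by
    refine ⟨?_⟩
    intro x h
    exact h.1 rfl

noncomputable instance powerGraphDecidableAdj (G : Type*) [Group G] :
    DecidableRel (powerGraph G).Adj :=
  Classical.decRel _

/-- The vertex connectivity of a finite graph: the minimum number of vertices whose
deletion yields a disconnected graph or a graph with exactly one vertex. -/
noncomputable def vertexConnectivity {V : Type*} [Fintype V] (Γ : SimpleGraph V) : ℕ :=
  sInf {n | ∃ S : Finset V, S.card = n ∧
    (¬ (SimpleGraph.induce ((↑S : Set V)ᶜ) Γ).Preconnected ∨ ((↑S : Set V)ᶜ).ncard = 1)}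

/-- A subgroup is a maximal cyclic subgroup if it is cyclic and not properly contained
in any cyclic subgroup. -/
def IsMaximalCyclic {G : Type*} [Group G] (M : Subgroup G) : Prop :=
  IsCyclic ↥M ∧ ∀ N : Subgroup G, IsCyclic ↥N → M ≤ N → M = N

/-- `K` is a maximal cyclic subgroup of the subgroup `H`. -/
def IsMaximalCyclicIn {G : Type*} [Group G] (H K : Subgroup G) : Prop :=
  IsCyclic ↥K ∧ K ≤ H ∧ ∀ N : Subgroup G, IsCyclic ↥N → N ≤ H → K ≤ N → K = N

/-- A generalized quaternion group: a dicyclic group `Q_{4n}` with `n ≥ 2` a power of 2. -/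
def IsGeneralizedQuaternion (G : Type*) [Group G] : Prop :=
  ∃ n : ℕ, 2 ≤ n ∧ (∃ k : ℕ, n = 2 ^ k) ∧ Nonempty (G ≃* QuaternionGroup n)

section AuxMaxCyc

variable {G : Type*} [Group G]

private lemma auxIsCyclicZpowers (g : G) : IsCyclic ↥(Subgroup.zpowers g) := by
  refine ⟨⟨⟨g, Subgroup.mem_zpowers g⟩, ?_⟩⟩
  rintro ⟨y, hy⟩
  obtain ⟨k, hk⟩ := Subgroup.mem_zpowers_iff.mp hy
  exact Subgroup.mem_zpowers_iff.mpr ⟨k, by ext; simpa using hk⟩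

private lemma auxCyclicEqZpowers {N : Subgroup G} (h : IsCyclic ↥N) :
    ∃ g : G, g ∈ N ∧ N = Subgroup.zpowers g := by
  obtain ⟨⟨g, hg⟩, hgen⟩ := h.exists_generator
  refine ⟨g, hg, le_antisymm (fun n hn => ?_) (Subgroup.zpowers_le.mpr hg)⟩
  obtain ⟨k, hk⟩ := Subgroup.mem_zpowers_iff.mp (hgen ⟨n, hn⟩)
  exact Subgroup.mem_zpowers_iff.mpr ⟨k, by simpa using congrArg ((↑) : N → G) hk⟩

private lemma auxNoncommProdPow {ι : Type*} (k : ℕ) (f : ι → G) (s : Finset ι) :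
    ∀ (comm : (s : Set ι).Pairwise (Function.onFun Commute f))
      (comm' : (s : Set ι).Pairwise (Function.onFun Commute fun i => f i ^ k)),
      s.noncommProd f comm ^ k = s.noncommProd (fun i => f i ^ k) comm' := by
  induction s using Finset.cons_induction with
  | empty => intro _ _; simp
  | cons a s ha ih =>
      intro comm comm'
      rw [Finset.noncommProd_cons, Finset.noncommProd_cons,
        (Finset.noncommProd_commute s f _ (f a) fun x hx =>
          comm.of_refl (Finset.mem_cons_self a s) (Finset.mem_cons_of_mem hx)).mul_pow,
        ih (comm.mono (by simp [Finset.coe_subset, Finset.subset_cons]))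
          (fun i hi j hj hij => (comm.of_refl (Finset.mem_cons_of_mem hi)
            (Finset.mem_cons_of_mem hj)).pow_pow k k)]

private lemma auxNoncommProdSingle {ι : Type*} [DecidableEq ι] (s : Finset ι) (f : ι → G)
    (comm) {i : ι} (hi : i ∈ s) (h : ∀ j ∈ s, j ≠ i → f j = 1) :
    s.noncommProd f comm = f i := by
  rw [← Finset.mul_noncommProd_erase s hi f comm (comm.mono (Finset.coe_subset.mpr (Finset.erase_subset i s))),
    Finset.noncommProd_eq_pow_card _ _ _ 1
      (fun j hj => h j (Finset.mem_of_mem_erase hj) (Finset.ne_of_mem_erase hj)),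
    one_pow, mul_one]

end AuxMaxCyc

/-- `⟨x⟩` is a maximal cyclic subgroup of a finite nilpotent group `G` iff each Sylow
component `⟨x_i⟩` is a maximal cyclic subgroup of the Sylow subgroup `P i`. -/
theorem maximal_cyclic_iff_components_maximal_cyclic
    {G : Type*} [Group G] [Fintype G] (hnil : Group.IsNilpotent G)
    (r : ℕ) (p α : Fin r → ℕ) (P : Fin r → Subgroup G)
    (hp : ∀ i, (p i).Prime) (hmono : StrictMono p) (hα : ∀ i, 1 ≤ α i)
    (hcard : Fintype.card G = ∏ i, p i ^ α i)
    (hP : ∀ i, Nat.card ↥(P i) = p i ^ α i)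
    (x : G) (xc : Fin r → G) (hxc : ∀ i, xc i ∈ P i)
    (hxprod : x = (List.ofFn xc).prod) :
    IsMaximalCyclic (Subgroup.zpowers x) ↔
      ∀ i, IsMaximalCyclicIn (P i) (Subgroup.zpowers (xc i)) := by
  classical
  have hcard' : Nat.card G = ∏ i, p i ^ α i := by rw [Nat.card_eq_fintype_card, hcard]
  have hpinj : Function.Injective p := hmono.injective
  have hcop : ∀ i j, i ≠ j → Nat.Coprime (p i ^ α i) (p j ^ α j) := fun i j hij =>
    Nat.Coprime.pow (α i) (α j) ((Nat.coprime_primes (hp i) (hp j)).mpr fun h => hij (hpinj h))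
  haveI : ∀ i, Fact (p i).Prime := fun i => ⟨hp i⟩
  haveI := hnil
  -- each P i is normal
  have hPnormal : ∀ i, (P i).Normal := by
    intro i
    have hfact : (Nat.card G).factorization (p i) = α i := by
      rw [hcard', Nat.factorization_prod (fun j _ => pow_ne_zero (α j) (hp j).pos.ne')]
      rw [Finsupp.finset_sum_apply]
      rw [Finset.sum_eq_single i]
      · rw [(hp i).factorization_pow, Finsupp.single_apply, if_pos rfl]
      · intro j _ hji
        rw [(hp j).factorization_pow, Finsupp.single_apply,
          if_neg (fun h => hji (hpinj h))]
      · exact fun h => absurd (Finset.mem_univ i) h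
    have hc : Nat.card ↥(P i) = p i ^ (Nat.card G).factorization (p i) := by
      rw [hP i, hfact]
    have := Sylow.normal_of_normalizerCondition (normalizerCondition_of_isNilpotent)
      (Sylow.ofCard (P i) hc)
    exact this
  have hcomm : ∀ i j, i ≠ j → ∀ a b : G, a ∈ P i → b ∈ P j → Commute a b := by
    intro i j hij a b ha hb
    refine Subgroup.commute_of_normal_of_disjoint _ _ (hPnormal i) (hPnormal j) ?_ a b ha hb
    exact disjoint_iff.mpr (Subgroup.inf_eq_bot_of_coprime
      (by rw [hP i, hP j]; exact hcop i j hij))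
  have horder : ∀ i, ∀ g ∈ P i, orderOf g ∣ p i ^ α i := by
    intro i g hg
    rw [← hP i]
    exact Subgroup.orderOf_dvd_natCard (P i) hg
  have commOf : ∀ (c : Fin r → G), (∀ j, c j ∈ P j) →
      ((Finset.univ : Finset (Fin r)) : Set (Fin r)).Pairwise (Function.onFun Commute c) :=
    fun c hc i _ j _ hij => hcomm i j hij _ _ (hc i) (hc j)
  have hofFn : ∀ (c : Fin r → G) (comm), Finset.univ.noncommProd c comm = (List.ofFn c).prod := by
    intro c comm
    rw [List.ofFn_eq_map]
    calc Finset.univ.noncommProd c comm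
        = (List.finRange r).toFinset.noncommProd c (by
            rw [List.toFinset_finRange]; exact comm) :=
          Finset.noncommProd_congr (List.toFinset_finRange r).symm (fun _ _ => rfl) comm
      _ = (List.map c (List.finRange r)).prod :=
          Finset.noncommProd_toFinset _ _ _ (List.nodup_finRange r)
  -- coprimality of orders across distinct components
  have hcoporder : ∀ (c : Fin r → G), (∀ j, c j ∈ P j) → ∀ i j, i ≠ j →
      Nat.Coprime (orderOf (c i)) (orderOf (c j)) := by
    intro c hc i j hij
    exact Nat.Coprime.coprime_dvd_left (horder i _ (hc i))
      (Nat.Coprime.coprime_dvd_right (horder j _ (hc j)) (hcop i j hij))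
  -- extraction: each component lies in the cyclic group generated by the product
  have hA : ∀ (c : Fin r → G), (∀ j, c j ∈ P j) → ∀ i : Fin r,
      c i ∈ Subgroup.zpowers ((List.ofFn c).prod) := by
    intro c hc i
    have hcm := commOf c hc
    set N : ℕ := ∏ j ∈ Finset.univ.erase i, orderOf (c j) with hN
    have hcopN : Nat.Coprime N (orderOf (c i)) := by
      apply Nat.Coprime.prod_left
      intro j hj
      exact hcoporder c hc j i (Finset.ne_of_mem_erase hj)
    set k : ℕ := N ^ (orderOf (c i)).totient with hk
    have hyk : (List.ofFn c).prod ^ k = c i := by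
      rw [← hofFn c hcm, auxNoncommProdPow k c Finset.univ hcm
        (show ((Finset.univ : Finset (Fin r)) : Set (Fin r)).Pairwise (Function.onFun Commute fun i => c i ^ k) from fun a _ b _ hab => (hcm.of_refl (Finset.mem_univ a) (Finset.mem_univ b)).pow_pow k k)]
      rw [auxNoncommProdSingle _ _ _ (Finset.mem_univ i) ?h1]
      · have hmod : k ≡ 1 [MOD orderOf (c i)] := Nat.ModEq.pow_totient hcopN
        calc c i ^ k = c i ^ 1 := pow_eq_pow_iff_modEq.mpr hmod
        _ = c i := pow_one _
      case h1 =>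
        intro j _ hji
        apply orderOf_dvd_iff_pow_eq_one.mp
        refine dvd_trans (Finset.dvd_prod_of_mem (fun j => orderOf (c j))
          (Finset.mem_erase.mpr ⟨hji, Finset.mem_univ j⟩)) ?_
        exact dvd_pow_self N (Nat.totient_pos.mpr (orderOf_pos (c i))).ne'
    exact Subgroup.mem_zpowers_iff.mpr ⟨(k : ℤ), by rw [zpow_natCast, hyk]⟩
  -- uniqueness: an element of P i in the cyclic group generated by the product lies
  -- in the cyclic group generated by the i-th component
  have hB : ∀ (c : Fin r → G), (∀ j, c j ∈ P j) → ∀ (i : Fin r) (z : G),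
      z ∈ P i → z ∈ Subgroup.zpowers ((List.ofFn c).prod) → z ∈ Subgroup.zpowers (c i) := by
    intro c hc i z hzP hz
    rw [← mem_powers_iff_mem_zpowers] at hz
    obtain ⟨m, hm⟩ := hz
    simp only [] at hm
    have hcm := commOf c hc
    have hcm' : ((Finset.univ : Finset (Fin r)) : Set (Fin r)).Pairwise
        (Function.onFun Commute fun j => c j ^ m) :=
      fun a _ b _ hab => (hcm.of_refl (Finset.mem_univ a) (Finset.mem_univ b)).pow_pow m m
    have h1 : z = Finset.univ.noncommProd (fun j => c j ^ m) hcm' := by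
      rw [← hm, ← hofFn c hcm, auxNoncommProdPow m c Finset.univ hcm hcm']
    have h2 : z = c i ^ m * (Finset.univ.erase i).noncommProd (fun j => c j ^ m)
        (hcm'.mono (by simp [Finset.coe_subset])) := by
      rw [h1, Finset.mul_noncommProd_erase _ (Finset.mem_univ i) _ hcm']
    set w := (Finset.univ.erase i).noncommProd (fun j => c j ^ m)
        (hcm'.mono (by simp [Finset.coe_subset])) with hw
    have hwP : w ∈ P i := by
      have hweq : w = (c i ^ m)⁻¹ * z := by rw [h2]; group
      rw [hweq]
      exact mul_mem (inv_mem (pow_mem (hc i) m)) hzP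
    set N : ℕ := ∏ j ∈ Finset.univ.erase i, orderOf (c j) with hN
    have hword : orderOf w ∣ N := by
      apply orderOf_dvd_iff_pow_eq_one.mpr
      rw [hw, auxNoncommProdPow N _ _ _
        (show ((Finset.univ.erase i : Finset (Fin r)) : Set (Fin r)).Pairwise (Function.onFun Commute fun j => (c j ^ m) ^ N) from fun a ha b hb hab => ((hcm'.mono (by simp [Finset.coe_subset])).of_refl ha hb).pow_pow N N)]
      rw [Finset.noncommProd_eq_pow_card _ _ _ 1 ?h2, one_pow]
      case h2 =>
        intro j hj
        rw [← pow_mul]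
        apply orderOf_dvd_iff_pow_eq_one.mp
        exact Dvd.dvd.mul_left (Finset.dvd_prod_of_mem (fun j => orderOf (c j)) hj) m
    have hword2 : orderOf w ∣ p i ^ α i := horder i w hwP
    have hNcop : Nat.Coprime N (p i ^ α i) := by
      apply Nat.Coprime.prod_left
      intro j hj
      exact Nat.Coprime.coprime_dvd_left (horder j _ (hc j))
        (hcop j i (Finset.ne_of_mem_erase hj))
    have hw1 : w = 1 := by
      have : orderOf w ∣ 1 := hNcop ▸ Nat.dvd_gcd hword hword2
      exact orderOf_eq_one_iff.mp (Nat.dvd_one.mp this)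
    rw [hw1, mul_one] at h2
    exact Subgroup.mem_zpowers_iff.mpr ⟨(m : ℤ), by rw [zpow_natCast, h2]⟩
  -- decomposition of an arbitrary element
  have hcommP : Pairwise fun i j : Fin r => ∀ a b : G, a ∈ P i → b ∈ P j → Commute a b :=
    fun i j hij => hcomm i j hij
  have hdecomp : ∀ y : G, ∃ c : Fin r → G, (∀ j, c j ∈ P j) ∧ y = (List.ofFn c).prod := by
    intro y
    haveI : ∀ i, Fintype (P i) := fun i => Fintype.ofFinite _
    have hind : iSupIndep P := Subgroup.independent_of_coprime_order hcommP
      (fun i j hij => by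
        show Nat.Coprime (Fintype.card ↥(P i)) (Fintype.card ↥(P j))
        rw [← Nat.card_eq_fintype_card, ← Nat.card_eq_fintype_card, hP i, hP j]
        exact hcop i j hij)
    have hinj := Subgroup.injective_noncommPiCoprod_of_iSupIndep (hcomm := hcommP) hind
    have hsup : (⨆ i, P i) = ⊤ := by
      apply Subgroup.eq_top_of_card_eq
      have e1 : ((⨆ i, P i : Subgroup G) : Set G) =
          Set.range (Subgroup.noncommPiCoprod hcommP) := by
        rw [← Subgroup.noncommPiCoprod_range]; rfl
      calc Nat.card ↥(⨆ i, P i) = Nat.card (Set.range (Subgroup.noncommPiCoprod hcommP)) :=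
            Nat.card_congr (Equiv.setCongr e1)
        _ = Nat.card (∀ i, ↥(P i)) := Nat.card_range_of_injective hinj
        _ = ∏ i, Nat.card ↥(P i) := Nat.card_pi
        _ = ∏ i, p i ^ α i := by simp_rw [hP]
        _ = Nat.card G := hcard'.symm
    have hy : y ∈ (Subgroup.noncommPiCoprod hcommP).range := by
      rw [Subgroup.noncommPiCoprod_range, hsup]; trivial
    obtain ⟨u, hu⟩ := hy
    refine ⟨fun j => ↑(u j), fun j => (u j).2, ?_⟩
    rw [← hu, Subgroup.noncommPiCoprod_apply]; exact hofFn _ _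
  constructor
  · -- forward
    intro hmax i
    refine ⟨auxIsCyclicZpowers _, Subgroup.zpowers_le.mpr (hxc i), ?_⟩
    intro N hNcyc hNP hle
    obtain ⟨g, hgN, rfl⟩ := auxCyclicEqZpowers hNcyc
    have hgP : g ∈ P i := hNP hgN
    set c' : Fin r → G := Function.update xc i g with hc'
    have hc'P : ∀ j, c' j ∈ P j := by
      intro j
      rcases eq_or_ne j i with rfl | hji
      · simpa [hc'] using hgP
      · simpa [hc', hji] using hxc j
    set z := (List.ofFn c').prod with hz
    have hgz : g ∈ Subgroup.zpowers z := by
      have := hA c' hc'P i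
      simpa [hc'] using this
    have hxz : x ∈ Subgroup.zpowers z := by
      rw [hxprod]
      apply list_prod_mem
      intro a ha
      obtain ⟨j, rfl⟩ := List.mem_ofFn.mp ha
      rcases eq_or_ne j i with rfl | hji
      · exact Subgroup.zpowers_le.mpr hgz (hle (Subgroup.mem_zpowers _))
      · have := hA c' hc'P j
        simpa [hc', hji] using this
    have heq : Subgroup.zpowers x = Subgroup.zpowers z :=
      hmax.2 _ (auxIsCyclicZpowers z) (Subgroup.zpowers_le.mpr hxz)
    have hgx : g ∈ Subgroup.zpowers x := by rw [heq]; exact hgz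
    rw [hxprod] at hgx
    have hgxc : g ∈ Subgroup.zpowers (xc i) := hB xc hxc i g hgP hgx
    exact le_antisymm hle (Subgroup.zpowers_le.mpr hgxc)
  · -- backward
    intro hcomp
    refine ⟨auxIsCyclicZpowers _, ?_⟩
    intro N hNcyc hle
    obtain ⟨y, hyN, rfl⟩ := auxCyclicEqZpowers hNcyc
    obtain ⟨c, hcP, hyc⟩ := hdecomp y
    have key : ∀ i, c i ∈ Subgroup.zpowers (xc i) := by
      intro i
      have h1 : xc i ∈ Subgroup.zpowers y := hle (by rw [hxprod]; exact hA xc hxc i)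
      rw [hyc] at h1
      have h2 : xc i ∈ Subgroup.zpowers (c i) := hB c hcP i (xc i) (hxc i) h1
      have h3 : Subgroup.zpowers (xc i) = Subgroup.zpowers (c i) :=
        (hcomp i).2.2 _ (auxIsCyclicZpowers _) (Subgroup.zpowers_le.mpr (hcP i))
          (Subgroup.zpowers_le.mpr h2)
      rw [h3]
      exact Subgroup.mem_zpowers _
    have hyx : y ∈ Subgroup.zpowers x := by
      rw [hyc]
      apply list_prod_mem
      intro a ha
      obtain ⟨j, rfl⟩ := List.mem_ofFn.mp ha
      have := key j
      have hxcj : xc j ∈ Subgroup.zpowers x := by rw [hxprod]; exact hA xc hxc j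
      exact Subgroup.zpowers_le.mpr hxcj (key j)
    exact le_antisymm hle (Subgroup.zpowers_le.mpr hyx)
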